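/- arXiv:2303.12716 — 2 statements merged into one kernel-verified Lean document; each statement's English description precedes it below -/
import Mathlib

section
/- Let α be an irrational number not equivalent to (1+√5)/2 and not equivalent to (1+√17)/2. If the continued fraction expansion α = [a₀; a₁, a₂, …] has aₙ ≥ 5 for infinitely many n, then 𝔨(α) ≤ 4/5. -/
open Filter

/-- The tails `αₙ = [aₙ; aₙ₊₁, …]` of the continued fraction of `α`. -/
noncomputable def cfTail (α : ℝ) : ℕ → ℝ
  | 0 => α
  | n + 1 => (Int.fract (cfTail α n))⁻¹

/-- The partial quotients `aₙ` of the continued fraction of `α`. -/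
noncomputable def cfDigit (α : ℝ) (n : ℕ) : ℤ := ⌊cfTail α n⌋

/-- Value `[a; b, c, …]` of a finite continued fraction given by a list. -/
noncomputable def finCF : List ℤ → ℝ
  | [] => 0
  | a :: l => (a : ℝ) + (finCF l)⁻¹

/-- `α*ₙ = [0; aₙ, aₙ₋₁, …, a₁]`. -/
noncomputable def cfStar (α : ℝ) (n : ℕ) : ℝ :=
  (finCF (((List.range' 1 n).reverse).map (cfDigit α)))⁻¹

/-- Numerators `pₙ` of the convergents of `α`. -/
noncomputable def cfNum (α : ℝ) : ℕ → ℤ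
  | 0 => cfDigit α 0
  | 1 => cfDigit α 1 * cfDigit α 0 + 1
  | n + 2 => cfDigit α (n + 2) * cfNum α (n + 1) + cfNum α n

/-- Denominators `qₙ` of the convergents of `α`. -/
noncomputable def cfDen (α : ℝ) : ℕ → ℤ
  | 0 => 1
  | 1 => cfDigit α 1
  | n + 2 => cfDigit α (n + 2) * cfDen α (n + 1) + cfDen α n

/-- The irrationality measure function `ψ_α^[2]` for "second best" approximations. -/
noncomputable def psi2 (α : ℝ) (t : ℝ) : ℝ :=
  sInf { x : ℝ | ∃ p q : ℤ, 1 ≤ q ∧ (q : ℝ) ≤ t ∧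
    (∀ n : ℕ, (p, q) ≠ (cfNum α n, cfDen α n)) ∧ x = |(q : ℝ) * α - (p : ℝ)| }

/-- The Diophantine constant `𝔨(α) = liminf_{t → ∞} t · ψ_α^[2](t)`. -/
noncomputable def kConst (α : ℝ) : ℝ := liminf (fun t : ℝ => t * psi2 α t) atTop

/-- Two numbers are equivalent if the tails of their continued fraction expansions
coincide: `a_{n+k} = b_{m+k}` for all `k ≥ 1`, for some positive integers `m`, `n`. -/
def CFEquiv (α β : ℝ) : Prop :=
  ∃ n m : ℕ, 0 < n ∧ 0 < m ∧ ∀ k : ℕ, 0 < k → cfDigit α (n + k) = cfDigit β (m + k)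

/-- The spectrum `𝕃₂` of values of `𝔨`. -/
def L2 : Set ℝ := { l : ℝ | ∃ α : ℝ, Irrational α ∧ l = kConst α }

/-- `κ¹ₙ(α) = (1 + α*ₙ₋₁)(αₙ − 1)/(αₙ + α*ₙ₋₁)`. -/
noncomputable def kappa1 (α : ℝ) (n : ℕ) : ℝ :=
  (1 + cfStar α (n - 1)) * (cfTail α n - 1) / (cfTail α n + cfStar α (n - 1))

/-- `κ²ₙ(α) = (1 − α*ₙ)(αₙ₊₁ + 1)/(αₙ₊₁ + α*ₙ)`. -/
noncomputable def kappa2 (α : ℝ) (n : ℕ) : ℝ :=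
  (1 - cfStar α n) * (cfTail α (n + 1) + 1) / (cfTail α (n + 1) + cfStar α n)

/-- `κ⁴ₙ(α) = 4/(αₙ + α*ₙ₋₁)`. -/
noncomputable def kappa4 (α : ℝ) (n : ℕ) : ℝ :=
  4 / (cfTail α n + cfStar α (n - 1))

section Aux
variable {α : ℝ}

lemma tail_irr (hα : Irrational α) : ∀ n, Irrational (cfTail α n)
  | 0 => hα
  | n + 1 => by
      have h := Irrational.sub_intCast (tail_irr hα n) ⌊cfTail α n⌋
      rw [Int.self_sub_floor] at h
      rw [cfTail]
      exact h.inv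

lemma tail_sub_digit (n : ℕ) :
    cfTail α n - (cfDigit α n : ℝ) = (cfTail α (n + 1))⁻¹ := by
  rw [show cfTail α (n+1) = (Int.fract (cfTail α n))⁻¹ from rfl, inv_inv, cfDigit,
    Int.self_sub_floor]

lemma one_lt_tail (hα : Irrational α) (n : ℕ) : 1 < cfTail α (n + 1) := by
  have h1 : 0 < Int.fract (cfTail α n) :=
    (Int.fract_pos).2 fun h => (tail_irr hα n).ne_int ⌊cfTail α n⌋ h
  have h2 : Int.fract (cfTail α n) < 1 := Int.fract_lt_one _
  rw [show cfTail α (n+1) = (Int.fract (cfTail α n))⁻¹ from rfl]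
  exact one_lt_inv_iff₀.2 ⟨h1, h2⟩

lemma digit_le_tail (n : ℕ) : (cfDigit α n : ℝ) ≤ cfTail α n := Int.floor_le _

lemma digit_pos (hα : Irrational α) (n : ℕ) : 1 ≤ cfDigit α (n + 1) :=
  Int.le_floor.2 (by exact_mod_cast (one_lt_tail hα n).le)

lemma den_pos (hα : Irrational α) : ∀ n, 1 ≤ cfDen α n
  | 0 => le_refl 1
  | 1 => digit_pos hα 0
  | n + 2 => by
      have h1 := den_pos hα (n+1)
      have h2 := den_pos hα n
      have h3 := digit_pos hα (n+1)
      rw [cfDen]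
      nlinarith

lemma den_ge (hα : Irrational α) : ∀ n : ℕ, (n : ℤ) ≤ cfDen α n
  | 0 => by simp [cfDen]
  | 1 => by exact_mod_cast digit_pos hα 0
  | n + 2 => by
      have h1 := den_ge hα (n+1)
      have h2 := den_pos hα n
      have h3 := digit_pos hα (n+1)
      have h4 : cfDen α (n+1) ≤ cfDigit α (n+2) * cfDen α (n+1) :=
        le_mul_of_one_le_left (le_trans zero_le_one (den_pos hα (n+1))) h3
      rw [cfDen]
      push_cast
      push_cast at h1
      linarith

/-- `Dₙ = qₙ α − pₙ`. -/
noncomputable def Dv (α : ℝ) (n : ℕ) : ℝ := (cfDen α n : ℝ) * α - (cfNum α n : ℝ)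

/-- `Xₙ = βₙ₊₁ qₙ + qₙ₋₁` (with `q₋₁ = 0`). -/
noncomputable def Xv (α : ℝ) : ℕ → ℝ
  | 0 => cfTail α 1
  | n + 1 => cfTail α (n + 2) * (cfDen α (n + 1) : ℝ) + (cfDen α n : ℝ)

lemma tail_pos (hα : Irrational α) (n : ℕ) : 0 < cfTail α (n + 1) :=
  lt_trans one_pos (one_lt_tail hα n)

lemma tail_ne (hα : Irrational α) (n : ℕ) : cfTail α (n + 1) ≠ 0 := (tail_pos hα n).ne'

lemma digit_mul (hα : Irrational α) (n : ℕ) :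
    ((cfDigit α n : ℝ)) * cfTail α (n + 1) = cfTail α n * cfTail α (n + 1) - 1 := by
  have h2 : (cfTail α n - (cfDigit α n : ℝ)) * cfTail α (n + 1) = 1 := by
    rw [tail_sub_digit n, inv_mul_cancel₀ (tail_ne hα n)]
  linear_combination -h2

lemma Dv_rec (hα : Irrational α) : ∀ n, cfTail α (n + 2) * Dv α (n + 1) = - Dv α n
  | 0 => by
      have e0 := digit_mul hα 0
      have e1 := digit_mul hα 1
      have h1 := tail_ne hα 0
      have h2 := tail_ne hα 1
      show cfTail α 2 * (((cfDigit α 1 : ℤ) : ℝ) * α - ((cfDigit α 1 * cfDigit α 0 + 1 : ℤ) : ℝ))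
          = -(((1:ℤ):ℝ) * α - ((cfDigit α 0 : ℤ) : ℝ))
      push_cast
      rw [show cfTail α 0 = α from rfl] at e0
      norm_num at e0 e1 ⊢
      linear_combination (α - (cfDigit α 0 : ℝ)) * e1 - cfTail α 2 * e0
  | n + 1 => by
      have ih := Dv_rec hα n
      have e := digit_mul hα (n + 2)
      show cfTail α (n+3) * (((cfDigit α (n+2) * cfDen α (n+1) + cfDen α n : ℤ) : ℝ) * α
          - ((cfDigit α (n+2) * cfNum α (n+1) + cfNum α n : ℤ) : ℝ)) = - Dv α (n+1)
      push_cast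
      unfold Dv at ih ⊢
      linear_combination ((cfDen α (n+1):ℝ) * α - (cfNum α (n+1):ℝ)) * e + cfTail α (n+3) * ih

end Aux

section Aux2
variable {α : ℝ}

lemma Xv_rec (hα : Irrational α) : ∀ n, Xv α (n + 1) = cfTail α (n + 2) * Xv α n
  | 0 => by
      have e1 := digit_mul hα 1
      show cfTail α 2 * ((cfDigit α 1 : ℤ) : ℝ) + ((1:ℤ):ℝ) = cfTail α 2 * cfTail α 1
      push_cast
      norm_num at e1
      linear_combination e1
  | n + 1 => by
      have e := digit_mul hα (n + 2)
      show cfTail α (n+3) * ((cfDigit α (n+2) * cfDen α (n+1) + cfDen α n : ℤ) : ℝ)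
          + (cfDen α (n+1) : ℝ)
          = cfTail α (n+3) * (cfTail α (n+2) * (cfDen α (n+1) : ℝ) + (cfDen α n : ℝ))
      push_cast
      linear_combination ((cfDen α (n+1) : ℝ)) * e

lemma Dv_Xv (hα : Irrational α) : ∀ n, Dv α n * Xv α n = (-1 : ℝ) ^ n
  | 0 => by
      have e0 := digit_mul hα 0
      rw [show cfTail α 0 = α from rfl] at e0
      show (((1:ℤ):ℝ) * α - ((cfDigit α 0 : ℤ):ℝ)) * cfTail α 1 = (-1:ℝ)^0
      push_cast
      norm_num at e0 ⊢
      linear_combination -e0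
  | n + 1 => by
      rw [Xv_rec hα n, show Dv α (n+1) * (cfTail α (n+2) * Xv α n)
          = (cfTail α (n+2) * Dv α (n+1)) * Xv α n by ring, Dv_rec hα n,
        pow_succ]
      rw [neg_mul, Dv_Xv hα n]
      ring

lemma Xv_pos (hα : Irrational α) : ∀ n, 0 < Xv α n
  | 0 => tail_pos hα 0
  | n + 1 => by
      have h1 := tail_pos hα (n + 1)
      have h2 := den_pos hα (n + 1)
      have h3 := den_pos hα n
      show 0 < cfTail α (n + 2) * (cfDen α (n + 1) : ℝ) + (cfDen α n : ℝ)
      have h2' : (1:ℝ) ≤ (cfDen α (n+1) : ℝ) := by exact_mod_cast h2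
      have h3' : (1:ℝ) ≤ (cfDen α n : ℝ) := by exact_mod_cast h3
      nlinarith

lemma abs_Dv (hα : Irrational α) (n : ℕ) : |Dv α n| * Xv α n = 1 := by
  have h := Dv_Xv hα n
  have hx := Xv_pos hα n
  have := abs_eq_abs.2 (Or.inl h)
  rw [abs_mul, abs_of_pos hx] at this
  rw [this]
  rcases neg_one_pow_eq_or ℝ n with h' | h' <;> rw [h'] <;> norm_num

lemma Det : ∀ m, cfNum α (m + 1) * cfDen α m - cfNum α m * cfDen α (m + 1) = (-1 : ℤ) ^ m
  | 0 => by simp [cfNum, cfDen]; ring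
  | m + 1 => by
      have ih : cfNum α (m + 1) * cfDen α m - cfNum α m * cfDen α (m + 1) = (-1 : ℤ) ^ m :=
        Det m
      show cfNum α (m+2) * cfDen α (m+1) - cfNum α (m+1) * cfDen α (m+2) = (-1:ℤ)^(m+1)
      rw [cfNum, cfDen, pow_succ]
      linear_combination -ih

end Aux2

/-- If `α` is irrational, equivalent neither to `(1+√5)/2` nor to `(1+√17)/2`,
and `aₙ ≥ 5` for infinitely many `n`, then `𝔨(α) ≤ 4/5`. -/
theorem stmt_11 (α : ℝ) (hα : Irrational α)
    (h5 : ¬ CFEquiv α ((1 + Real.sqrt 5) / 2))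
    (h17 : ¬ CFEquiv α ((1 + Real.sqrt 17) / 2))
    (hbig : ∃ᶠ n in atTop, 5 ≤ cfDigit α n) :
    kConst α ≤ 4 / 5 := by
  have psi2_nonneg : ∀ t : ℝ, 0 ≤ psi2 α t := by
    intro t
    apply Real.sInf_nonneg
    rintro x ⟨p, q, -, -, -, rfl⟩
    positivity
  have hbdd : IsBoundedUnder (· ≥ ·) atTop (fun t : ℝ => t * psi2 α t) := by
    refine ⟨0, ?_⟩
    rw [eventually_map]
    filter_upwards [eventually_ge_atTop (0:ℝ)] with t ht
    exact mul_nonneg ht (psi2_nonneg t)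
  refine liminf_le_of_frequently_le ?_ hbdd
  rw [frequently_atTop]
  intro b
  obtain ⟨n, hn, h5n⟩ := (frequently_atTop.1 hbig) (max 2 (⌈b⌉₊ + 2))
  obtain ⟨k, rfl⟩ : ∃ k, n = k + 2 := ⟨n - 2, by have := le_max_left 2 (⌈b⌉₊ + 2); omega⟩
  set q : ℤ := cfDen α (k+1) with hqdef
  set p : ℤ := cfNum α (k+1) with hpdef
  set t : ℝ := ((2 * q : ℤ) : ℝ) with htdef
  have hq1 : 1 ≤ q := den_pos hα (k+1)
  have hqk : ((k:ℤ)+1) ≤ q := by exact_mod_cast den_ge hα (k+1)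
  have hqR : (1:ℝ) ≤ (q:ℝ) := by exact_mod_cast hq1
  refine ⟨t, ?_, ?_⟩
  · -- b ≤ t
    have h1 : (⌈b⌉₊ : ℤ) + 2 ≤ (k:ℤ) + 2 := by
      have := le_max_right 2 (⌈b⌉₊ + 2)
      exact_mod_cast le_trans this hn
    have h2 : b ≤ (⌈b⌉₊ : ℝ) := Nat.le_ceil b
    have h3 : ((⌈b⌉₊ : ℤ) : ℝ) ≤ (q : ℝ) := by exact_mod_cast le_trans (by omega) hqk
    rw [htdef]
    push_cast at h3 ⊢
    linarith
  · -- t * psi2 α t ≤ 4/5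
    have hnc : ∀ m : ℕ, (2*p, 2*q) ≠ (cfNum α m, cfDen α m) := by
      intro m hm
      have h1 : 2*p = cfNum α m := congrArg Prod.fst hm
      have h2 : 2*q = cfDen α m := congrArg Prod.snd hm
      have hd := Det (α := α) m
      rw [← h1, ← h2] at hd
      have h2d : (2:ℤ) ∣ (-1:ℤ)^m :=
        ⟨cfNum α (m+1) * q - p * cfDen α (m+1), by rw [← hd]; ring⟩
      rcases neg_one_pow_eq_or ℤ m with he | he <;> rw [he] at h2d <;> omega
    have hmem : |((2*q : ℤ) : ℝ) * α - ((2*p : ℤ) : ℝ)| ∈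
        { x : ℝ | ∃ p' q' : ℤ, 1 ≤ q' ∧ (q' : ℝ) ≤ t ∧
          (∀ m : ℕ, (p', q') ≠ (cfNum α m, cfDen α m)) ∧
          x = |(q' : ℝ) * α - (p' : ℝ)| } :=
      ⟨2*p, 2*q, by omega, le_refl _, hnc, rfl⟩
    have hpsile : psi2 α t ≤ |((2*q : ℤ) : ℝ) * α - ((2*p : ℤ) : ℝ)| := by
      rw [psi2]
      exact csInf_le ⟨0, fun x hx => by obtain ⟨p', q', -, -, -, rfl⟩ := hx; positivity⟩ hmem
    have hx0 : |((2*q : ℤ) : ℝ) * α - ((2*p : ℤ) : ℝ)| = 2 * |Dv α (k+1)| := by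
      rw [show ((2*q : ℤ) : ℝ) * α - ((2*p : ℤ) : ℝ) = 2 * Dv α (k+1) by
        rw [Dv]; push_cast; ring, abs_mul]
      norm_num
    have hXpos := Xv_pos hα (k+1)
    have habs := abs_Dv hα (k+1)
    have h5' : (5:ℝ) ≤ cfTail α (k+2) := by
      have : ((5:ℤ):ℝ) ≤ ((cfDigit α (k+2) : ℤ) : ℝ) := by exact_mod_cast h5n
      exact le_trans this (digit_le_tail (k+2))
    have hXv : 5 * (q:ℝ) ≤ Xv α (k+1) := by
      have hk : (1:ℝ) ≤ ((cfDen α k : ℤ) : ℝ) := by exact_mod_cast den_pos hα k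
      show 5 * (q:ℝ) ≤ cfTail α (k+2) * ((cfDen α (k+1) : ℤ) : ℝ) + ((cfDen α k : ℤ) : ℝ)
      rw [← hqdef]
      nlinarith
    have ht0 : (0:ℝ) ≤ t := by rw [htdef]; push_cast; linarith
    have habs' : |Dv α (k+1)| = (Xv α (k+1))⁻¹ := by
      field_simp
      linarith [habs]
    calc t * psi2 α t ≤ t * (2 * |Dv α (k+1)|) := by
          rw [← hx0]; exact mul_le_mul_of_nonneg_left hpsile ht0
      _ = 4 * (q:ℝ) / Xv α (k+1) := by
          rw [habs', htdef]; push_cast; field_simp; ring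
      _ ≤ 4 * (q:ℝ) / (5 * (q:ℝ)) := by
          apply div_le_div_of_nonneg_left (by linarith) (by linarith) hXv
      _ = 4 / 5 := by
          rw [mul_comm 4 (q:ℝ), mul_comm 5 (q:ℝ), mul_div_mul_left _ _ (by linarith : (q:ℝ) ≠ 0)]
end

section
/- Let α be an irrational number not equivalent to (1+√5)/2 and not equivalent bis (1+√17)/2, whose continued fraction expansion has aₙ ∈ {1, 3} for infinitely many n. If for infinitely many n one has a_{n−1} = aₙ = 3, then 𝔨(α) ≤ 39/43. -/
open Filter

lemma cfTail_irrational (α : ℝ) (hα : Irrational α) : ∀ n, Irrational (cfTail α n)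
  | 0 => hα
  | n + 1 => by
      have ih := cfTail_irrational α hα n
      show Irrational (Int.fract (cfTail α n))⁻¹
      rw [Int.fract]
      exact (Irrational.sub_intCast ih _).inv

lemma one_lt_cfTail (α : ℝ) (hα : Irrational α) (n : ℕ) : 1 < cfTail α (n + 1) := by
  have h := cfTail_irrational α hα n
  have hf : 0 < Int.fract (cfTail α n) := Int.fract_pos.2 (h.ne_int _)
  have hf1 : Int.fract (cfTail α n) < 1 := Int.fract_lt_one _
  exact one_lt_inv₀ hf |>.mpr hf1

lemma cfTail_succ (α : ℝ) (hα : Irrational α) (n : ℕ) :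
    cfTail α n = (cfDigit α n : ℝ) + (cfTail α (n + 1))⁻¹ := by
  show cfTail α n = _ + ((Int.fract (cfTail α n))⁻¹)⁻¹
  rw [inv_inv, cfDigit, Int.fract]
  ring

lemma cfDigit_pos (α : ℝ) (hα : Irrational α) (n : ℕ) : 1 ≤ cfDigit α (n + 1) := by
  have := one_lt_cfTail α hα n
  rw [cfDigit, Int.le_floor]
  push_cast
  linarith

lemma cfDen_pos_mono (α : ℝ) (hα : Irrational α) :
    ∀ n, 1 ≤ cfDen α n ∧ cfDen α n ≤ cfDen α (n + 1)
  | 0 => by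
      refine ⟨le_refl _, ?_⟩
      show (1 : ℤ) ≤ cfDigit α 1
      exact cfDigit_pos α hα 0
  | n + 1 => by
      obtain ⟨h1, h2⟩ := cfDen_pos_mono α hα n
      have h3 : 1 ≤ cfDen α (n + 1) := h1.trans h2
      have hd := cfDigit_pos α hα (n + 1)
      constructor
      · exact h3
      · show cfDen α (n+1) ≤ cfDigit α (n+2) * cfDen α (n+1) + cfDen α n
        nlinarith

lemma cfDen_one_le (α : ℝ) (hα : Irrational α) (n : ℕ) : 1 ≤ cfDen α n :=
  (cfDen_pos_mono α hα n).1

lemma cfDen_mono (α : ℝ) (hα : Irrational α) : Monotone (cfDen α) :=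
  monotone_nat_of_le_succ fun n => (cfDen_pos_mono α hα n).2

lemma cfDen_ge (α : ℝ) (hα : Irrational α) :
    ∀ n : ℕ, (n : ℤ) ≤ cfDen α n ∧ ((n : ℤ) + 1) ≤ cfDen α (n + 1)
  | 0 => by
      refine ⟨by norm_num [cfDen], ?_⟩
      show ((0:ℕ):ℤ) + 1 ≤ cfDigit α 1
      simpa using cfDigit_pos α hα 0
  | n + 1 => by
      obtain ⟨h1, h2⟩ := cfDen_ge α hα n
      refine ⟨h2, ?_⟩
      have hd := cfDigit_pos α hα (n + 1)
      have h3 := cfDen_one_le α hα n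
      have h4 := cfDen_one_le α hα (n + 1)
      show ((n:ℤ) + 1 + 1) ≤ cfDigit α (n+2) * cfDen α (n+1) + cfDen α n
      nlinarith


lemma cf_key_aux0 (a0 a1 x1 x2 α : ℝ) (h1 : x1 ≠ 0) (h2 : x2 ≠ 0)
    (e1 : α = a0 + x1⁻¹) (e2 : x1 = a1 + x2⁻¹) :
    α * (a1 * x2 + 1) = (a1 * a0 + 1) * x2 + a0 := by
  have hne : a1 + x2⁻¹ ≠ 0 := e2 ▸ h1
  have hne' : a1 * x2 + 1 ≠ 0 := by
    have : a1 * x2 + 1 = x2 * (a1 + x2⁻¹) := by field_simp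
    rw [this]; exact mul_ne_zero h2 hne
  rw [e1, e2]
  field_simp
  ring

lemma cf_key_aux1 (u w P1 P0 d α x y : ℝ) (hy : y ≠ 0) (hx : x = d + y⁻¹)
    (ih : α * (u * x + w) = P1 * x + P0) :
    α * ((d * u + w) * y + u) = (d * P1 + P0) * y + P1 := by
  rw [hx] at ih
  field_simp at ih
  linear_combination ih

lemma cf_key (α : ℝ) (hα : Irrational α) : ∀ n : ℕ,
    α * ((cfDen α (n+1) : ℝ) * cfTail α (n+2) + (cfDen α n : ℝ)) =
      (cfNum α (n+1) : ℝ) * cfTail α (n+2) + (cfNum α n : ℝ)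
  | 0 => by
      have hx1 : cfTail α 1 ≠ 0 := (lt_trans one_pos (one_lt_cfTail α hα 0)).ne'
      have hx2 : cfTail α 2 ≠ 0 := (lt_trans one_pos (one_lt_cfTail α hα 1)).ne'
      have e1 : α = (cfDigit α 0 : ℝ) + (cfTail α 1)⁻¹ := cfTail_succ α hα 0
      have e2 : cfTail α 1 = (cfDigit α 1 : ℝ) + (cfTail α 2)⁻¹ := cfTail_succ α hα 1
      show α * ((cfDigit α 1 : ℝ) * cfTail α 2 + ((1:ℤ):ℝ)) =
        ((cfDigit α 1 * cfDigit α 0 + 1 : ℤ) : ℝ) * cfTail α 2 + ((cfDigit α 0 : ℤ):ℝ)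
      push_cast
      exact cf_key_aux0 _ _ _ _ _ hx1 hx2 e1 e2
  | n + 1 => by
      have ih := cf_key α hα n
      have hrec : cfTail α (n+2) = (cfDigit α (n+2) : ℝ) + (cfTail α (n+3))⁻¹ := cfTail_succ α hα (n+2)
      have hy : cfTail α (n+3) ≠ 0 := (lt_trans one_pos (one_lt_cfTail α hα (n+2))).ne'
      have hq : cfDen α (n+2) = cfDigit α (n+2) * cfDen α (n+1) + cfDen α n := rfl
      have hp : cfNum α (n+2) = cfDigit α (n+2) * cfNum α (n+1) + cfNum α n := rfl
      rw [hq, hp]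
      push_cast
      exact cf_key_aux1 _ _ _ _ _ _ _ _ hy hrec ih
lemma cf_det (α : ℝ) : ∀ n : ℕ,
    cfNum α (n+1) * cfDen α n - cfNum α n * cfDen α (n+1) = (-1) ^ n
  | 0 => by
      show (cfDigit α 1 * cfDigit α 0 + 1) * 1 - cfDigit α 0 * cfDigit α 1 = (-1:ℤ)^0
      ring
  | n + 1 => by
      have ih := cf_det α n
      show (cfDigit α (n+2) * cfNum α (n+1) + cfNum α n) * cfDen α (n+1)
        - cfNum α (n+1) * (cfDigit α (n+2) * cfDen α (n+1) + cfDen α n) = (-1:ℤ)^(n+1)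
      rw [pow_succ]
      linarith [ih]

lemma psi2_le (α : ℝ) (p q : ℤ) (hq1 : 1 ≤ q)
    (hnc : ∀ k : ℕ, (p, q) ≠ (cfNum α k, cfDen α k)) :
    psi2 α (q : ℝ) ≤ |(q : ℝ) * α - (p : ℝ)| := by
  rw [psi2]
  apply csInf_le
  · refine ⟨0, fun y hy => ?_⟩
    obtain ⟨p', q', _, _, _, rfl⟩ := hy
    positivity
  · exact ⟨p, q, hq1, le_refl _, hnc, rfl⟩

/-- If `α` is irrational, equivalent neither to `(1+√5)/2` nor to `(1+√17)/2`,
with `aₙ ∈ {1, 3}` for infinitely many `n`, and for infinitely many `n` one has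
`aₙ₋₁ = aₙ = 3`, then `𝔨(α) ≤ 39/43`. -/
theorem stmt_14 (α : ℝ) (hα : Irrational α)
    (h5 : ¬ CFEquiv α ((1 + Real.sqrt 5) / 2))
    (h17 : ¬ CFEquiv α ((1 + Real.sqrt 17) / 2))
    (hmem : ∃ᶠ n in atTop, cfDigit α n = 1 ∨ cfDigit α n = 3)
    (hpat : ∃ᶠ n in atTop, cfDigit α n = 3 ∧ cfDigit α (n + 1) = 3) :
    kConst α ≤ 39 / 43 := by
  have hirr := cfTail_irrational α hα
  have hbdd : IsBoundedUnder (· ≥ ·) atTop (fun t : ℝ => t * psi2 α t) := by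
    refine ⟨0, ?_⟩
    rw [Filter.eventually_map]
    filter_upwards [Filter.eventually_ge_atTop (0:ℝ)] with t ht
    have h0 : 0 ≤ psi2 α t := by
      rw [psi2]
      apply Real.sInf_nonneg
      rintro y ⟨p', q', _, _, _, rfl⟩
      positivity
    exact mul_nonneg ht h0
  rw [kConst]
  refine Filter.liminf_le_of_frequently_le ?_ hbdd
  rw [Filter.frequently_atTop]
  intro b
  obtain ⟨m, hmN, hd2, hd3⟩ := Filter.frequently_atTop.mp hpat (max 2 (⌈b⌉₊ + 2))
  have hm2 : 2 ≤ m := le_trans (le_max_left _ _) hmN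
  have hmb : ⌈b⌉₊ + 2 ≤ m := le_trans (le_max_right _ _) hmN
  obtain ⟨n, rfl⟩ : ∃ n, m = n + 2 := ⟨m - 2, by omega⟩
  have hd2' : cfDigit α (n+2) = 3 := hd2
  have hd3' : cfDigit α (n+3) = 3 := hd3
  have hfl : ⌊cfTail α (n+3)⌋ = 3 := hd3'
  have hx3 : (3:ℝ) < cfTail α (n+3) := by
    have h1 : ((3:ℤ):ℝ) ≤ cfTail α (n+3) := by rw [← hfl]; exact Int.floor_le _
    have h2 : cfTail α (n+3) ≠ ((3:ℤ):ℝ) := (hirr (n+3)).ne_int 3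
    push_cast at h1 h2
    exact lt_of_le_of_ne h1 (Ne.symm h2)
  have hx4 : cfTail α (n+3) < 4 := by
    have h := Int.lt_floor_add_one (cfTail α (n+3))
    rw [hfl] at h
    push_cast at h
    linarith
  have hu1 : 1 ≤ cfDen α (n+1) := cfDen_one_le α hα (n+1)
  have hw1 : 1 ≤ cfDen α n := cfDen_one_le α hα n
  have hv1 : 1 ≤ cfDen α (n+2) := cfDen_one_le α hα (n+2)
  have hwu : cfDen α n ≤ cfDen α (n+1) := cfDen_mono α hα (Nat.le_succ n)
  have hv : cfDen α (n+2) = 3 * cfDen α (n+1) + cfDen α n := by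
    show cfDigit α (n+2) * cfDen α (n+1) + cfDen α n = _
    rw [hd2']
  have hQ3 : cfDen α (n+3) = 3 * cfDen α (n+2) + cfDen α (n+1) := by
    show cfDigit α (n+3) * cfDen α (n+2) + cfDen α (n+1) = _
    rw [hd3']
  have hge1 : ((n:ℤ) + 1) ≤ cfDen α (n+1) := by
    have := (cfDen_ge α hα (n+1)).1; push_cast at this; linarith
  have key : α * ((cfDen α (n+2) : ℝ) * cfTail α (n+3) + (cfDen α (n+1) : ℝ)) =
      (cfNum α (n+2) : ℝ) * cfTail α (n+3) + (cfNum α (n+1) : ℝ) := cf_key α hα (n+1)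
  have det : (cfNum α (n+2) : ℝ) * (cfDen α (n+1) : ℝ) -
      (cfNum α (n+1) : ℝ) * (cfDen α (n+2) : ℝ) = (-1:ℝ) ^ (n+1) := by
    exact_mod_cast cf_det α (n+1)
  have huR : (1:ℝ) ≤ (cfDen α (n+1) : ℝ) := by exact_mod_cast hu1
  have hvR : (1:ℝ) ≤ (cfDen α (n+2) : ℝ) := by exact_mod_cast hv1
  have hv4 : cfDen α (n+2) ≤ 4 * cfDen α (n+1) := by omega
  have hv4R : (cfDen α (n+2) : ℝ) ≤ 4 * (cfDen α (n+1) : ℝ) := by exact_mod_cast hv4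
  have hD : (0:ℝ) < (cfDen α (n+2) : ℝ) * cfTail α (n+3) + (cfDen α (n+1) : ℝ) := by
    nlinarith
  rcases le_or_gt ((cfDen α (n+1) : ℝ) * cfTail α (n+3)) (cfDen α (n+2) : ℝ) with hc | hc
  · -- pair (p_{n+2}+p_{n+1}, q_{n+2}+q_{n+1})
    refine ⟨((cfDen α (n+2) + cfDen α (n+1) : ℤ) : ℝ), ?_, ?_⟩
    · have h2 : ((⌈b⌉₊ : ℕ) : ℤ) ≤ cfDen α (n+2) + cfDen α (n+1) := by
        have h3 : ((n:ℤ) + 2) ≤ cfDen α (n+2) := by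
          have := (cfDen_ge α hα (n+2)).1; push_cast at this; linarith
        omega
      calc b ≤ ((⌈b⌉₊ : ℕ) : ℝ) := Nat.le_ceil b
        _ ≤ _ := by exact_mod_cast h2
    · have hq1 : (1:ℤ) ≤ cfDen α (n+2) + cfDen α (n+1) := by omega
      have hnc : ∀ k : ℕ, (cfNum α (n+2) + cfNum α (n+1), cfDen α (n+2) + cfDen α (n+1)) ≠
          (cfNum α k, cfDen α k) := by
        intro k hk
        have h2 : cfDen α (n+2) + cfDen α (n+1) = cfDen α k := congrArg Prod.snd hk
        rcases le_or_gt k (n+2) with h | h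
        · have := cfDen_mono α hα h
          omega
        · have := cfDen_mono α hα (show n + 3 ≤ k from h)
          omega
      have h0 : (((cfDen α (n+2) + cfDen α (n+1) : ℤ) : ℝ) * α -
          ((cfNum α (n+2) + cfNum α (n+1) : ℤ) : ℝ)) *
          ((cfDen α (n+2) : ℝ) * cfTail α (n+3) + (cfDen α (n+1) : ℝ)) =
          (cfTail α (n+3) - 1) * (-1:ℝ) ^ (n+1) := by
        push_cast
        linear_combination ((cfDen α (n+2) : ℝ) + (cfDen α (n+1) : ℝ)) * key +
          (cfTail α (n+3) - 1) * det
      have habs : |((cfDen α (n+2) + cfDen α (n+1) : ℤ) : ℝ) * α -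
          ((cfNum α (n+2) + cfNum α (n+1) : ℤ) : ℝ)| =
          (cfTail α (n+3) - 1) /
            ((cfDen α (n+2) : ℝ) * cfTail α (n+3) + (cfDen α (n+1) : ℝ)) := by
        rw [eq_div_iff hD.ne']
        calc |((cfDen α (n+2) + cfDen α (n+1) : ℤ) : ℝ) * α -
              ((cfNum α (n+2) + cfNum α (n+1) : ℤ) : ℝ)| *
              ((cfDen α (n+2) : ℝ) * cfTail α (n+3) + (cfDen α (n+1) : ℝ))
            = |(((cfDen α (n+2) + cfDen α (n+1) : ℤ) : ℝ) * α -
              ((cfNum α (n+2) + cfNum α (n+1) : ℤ) : ℝ)) *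
              ((cfDen α (n+2) : ℝ) * cfTail α (n+3) + (cfDen α (n+1) : ℝ))| := by
              rw [abs_mul, abs_of_pos hD]
          _ = |(cfTail α (n+3) - 1) * (-1:ℝ) ^ (n+1)| := by rw [h0]
          _ = cfTail α (n+3) - 1 := by
              rw [abs_mul, abs_pow, abs_neg, abs_one, one_pow, mul_one,
                abs_of_pos (by linarith : (0:ℝ) < cfTail α (n+3) - 1)]
      have hpsi := psi2_le α (cfNum α (n+2) + cfNum α (n+1))
        (cfDen α (n+2) + cfDen α (n+1)) hq1 hnc
      have hq0 : (0:ℝ) ≤ ((cfDen α (n+2) + cfDen α (n+1) : ℤ) : ℝ) := by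
        push_cast; linarith
      calc ((cfDen α (n+2) + cfDen α (n+1) : ℤ) : ℝ) *
            psi2 α ((cfDen α (n+2) + cfDen α (n+1) : ℤ) : ℝ)
          ≤ ((cfDen α (n+2) + cfDen α (n+1) : ℤ) : ℝ) *
            |((cfDen α (n+2) + cfDen α (n+1) : ℤ) : ℝ) * α -
              ((cfNum α (n+2) + cfNum α (n+1) : ℤ) : ℝ)| :=
            mul_le_mul_of_nonneg_left hpsi hq0
        _ = (((cfDen α (n+2) + cfDen α (n+1) : ℤ) : ℝ) * (cfTail α (n+3) - 1)) /
            ((cfDen α (n+2) : ℝ) * cfTail α (n+3) + (cfDen α (n+1) : ℝ)) := by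
            rw [habs]; ring
        _ ≤ 39 / 43 := by
            rw [div_le_iff₀ hD]
            push_cast
            nlinarith [mul_le_mul_of_nonneg_left hc
                (by linarith : (0:ℝ) ≤ 2 * (cfDen α (n+2) : ℝ)),
              mul_nonneg (by linarith : (0:ℝ) ≤ (cfDen α (n+2) : ℝ) -
                (cfDen α (n+1) : ℝ) * cfTail α (n+3))
                (by linarith : (0:ℝ) ≤ 4 * (cfDen α (n+1) : ℝ) - (cfDen α (n+2) : ℝ))]
  · -- pair (p_{n+2}-p_{n+1}, q_{n+2}-q_{n+1})
    refine ⟨((cfDen α (n+2) - cfDen α (n+1) : ℤ) : ℝ), ?_, ?_⟩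
    · have h2 : ((⌈b⌉₊ : ℕ) : ℤ) ≤ cfDen α (n+2) - cfDen α (n+1) := by omega
      calc b ≤ ((⌈b⌉₊ : ℕ) : ℝ) := Nat.le_ceil b
        _ ≤ _ := by exact_mod_cast h2
    · have hq1 : (1:ℤ) ≤ cfDen α (n+2) - cfDen α (n+1) := by omega
      have hnc : ∀ k : ℕ, (cfNum α (n+2) - cfNum α (n+1), cfDen α (n+2) - cfDen α (n+1)) ≠
          (cfNum α k, cfDen α k) := by
        intro k hk
        have h2 : cfDen α (n+2) - cfDen α (n+1) = cfDen α k := congrArg Prod.snd hk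
        rcases le_or_gt k (n+1) with h | h
        · have := cfDen_mono α hα h
          omega
        · have := cfDen_mono α hα (show n + 2 ≤ k from h)
          omega
      have h0 : (((cfDen α (n+2) - cfDen α (n+1) : ℤ) : ℝ) * α -
          ((cfNum α (n+2) - cfNum α (n+1) : ℤ) : ℝ)) *
          ((cfDen α (n+2) : ℝ) * cfTail α (n+3) + (cfDen α (n+1) : ℝ)) =
          (cfTail α (n+3) + 1) * (-1:ℝ) ^ (n+2) := by
        push_cast
        linear_combination ((cfDen α (n+2) : ℝ) - (cfDen α (n+1) : ℝ)) * key -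
          (cfTail α (n+3) + 1) * det
      have habs : |((cfDen α (n+2) - cfDen α (n+1) : ℤ) : ℝ) * α -
          ((cfNum α (n+2) - cfNum α (n+1) : ℤ) : ℝ)| =
          (cfTail α (n+3) + 1) /
            ((cfDen α (n+2) : ℝ) * cfTail α (n+3) + (cfDen α (n+1) : ℝ)) := by
        rw [eq_div_iff hD.ne']
        calc |((cfDen α (n+2) - cfDen α (n+1) : ℤ) : ℝ) * α -
              ((cfNum α (n+2) - cfNum α (n+1) : ℤ) : ℝ)| *
              ((cfDen α (n+2) : ℝ) * cfTail α (n+3) + (cfDen α (n+1) : ℝ))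
            = |(((cfDen α (n+2) - cfDen α (n+1) : ℤ) : ℝ) * α -
              ((cfNum α (n+2) - cfNum α (n+1) : ℤ) : ℝ)) *
              ((cfDen α (n+2) : ℝ) * cfTail α (n+3) + (cfDen α (n+1) : ℝ))| := by
              rw [abs_mul, abs_of_pos hD]
          _ = |(cfTail α (n+3) + 1) * (-1:ℝ) ^ (n+2)| := by rw [h0]
          _ = cfTail α (n+3) + 1 := by
              rw [abs_mul, abs_pow, abs_neg, abs_one, one_pow, mul_one,
                abs_of_pos (by linarith : (0:ℝ) < cfTail α (n+3) + 1)]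
      have hpsi := psi2_le α (cfNum α (n+2) - cfNum α (n+1))
        (cfDen α (n+2) - cfDen α (n+1)) hq1 hnc
      have hq0 : (0:ℝ) ≤ ((cfDen α (n+2) - cfDen α (n+1) : ℤ) : ℝ) := by
        have : (0:ℤ) ≤ cfDen α (n+2) - cfDen α (n+1) := by omega
        exact_mod_cast this
      calc ((cfDen α (n+2) - cfDen α (n+1) : ℤ) : ℝ) *
            psi2 α ((cfDen α (n+2) - cfDen α (n+1) : ℤ) : ℝ)
          ≤ ((cfDen α (n+2) - cfDen α (n+1) : ℤ) : ℝ) *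
            |((cfDen α (n+2) - cfDen α (n+1) : ℤ) : ℝ) * α -
              ((cfNum α (n+2) - cfNum α (n+1) : ℤ) : ℝ)| :=
            mul_le_mul_of_nonneg_left hpsi hq0
        _ = (((cfDen α (n+2) - cfDen α (n+1) : ℤ) : ℝ) * (cfTail α (n+3) + 1)) /
            ((cfDen α (n+2) : ℝ) * cfTail α (n+3) + (cfDen α (n+1) : ℝ)) := by
            rw [habs]; ring
        _ ≤ 39 / 43 := by
            rw [div_le_iff₀ hD]
            push_cast
            nlinarith [mul_nonneg (by linarith : (0:ℝ) ≤ (cfDen α (n+1) : ℝ) * cfTail α (n+3) -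
                (cfDen α (n+2) : ℝ))
                (by linarith : (0:ℝ) ≤ 4 * (cfDen α (n+1) : ℝ) - (cfDen α (n+2) : ℝ)),
              mul_nonneg (by linarith : (0:ℝ) ≤ 4 * (cfDen α (n+1) : ℝ) - (cfDen α (n+2) : ℝ))
                (by linarith : (0:ℝ) ≤ 4 - cfTail α (n+3)),
              mul_nonneg (by linarith : (0:ℝ) ≤ (cfDen α (n+1) : ℝ))
                (by linarith : (0:ℝ) ≤ 4 - cfTail α (n+3))]
end
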